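/- Let (A_l)_{l≥0} be a real sequence and set u_k = A_{k+1} − A_k for all k. Fix j ≥ 0 and n ≥ 1, and suppose det((Δ²A)_{j+i+k})_{0≤i,k≤n−1} ≠ 0, where (Δ²A)_m = A_{m+2} − 2A_{m+1} + A_m. Then the linear system A_l = B + Σ_{k=1}^n ᾱ_k u_{k+l−1}, l = j, …, j+n, has a unique solution, and its component B equals the Shanks transform: B = det(A_{j+i+k})_{0≤i,k≤n} / det((Δ²A)_{j+i+k})_{0≤i,k≤n−1}. -/
import Mathlib

open Matrix Finset

private lemma shift_sum {n : ℕ} (c : Fin (n+1)) (f : Fin (n+1) → ℝ) :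
    (∑ a : Fin (n+1), if (a:ℕ)+1 = (c:ℕ) then f a else 0)
      = Fin.cases 0 (fun c' => f c'.castSucc) c := by
  induction c using Fin.cases with
  | zero => simp
  | succ c' =>
    rw [Finset.sum_eq_single c'.castSucc]
    · simp
    · intro a _ ha
      rw [if_neg]
      intro h
      exact ha (Fin.ext (by simpa using h))
    · intro h; exact absurd (Finset.mem_univ _) h

theorem stmt_15 (A : ℕ → ℝ) (j n : ℕ) (hn : 1 ≤ n)
    (hD : Matrix.det (Matrix.of fun i k : Fin n =>
        A (j + i + k + 2) - 2 * A (j + i + k + 1) + A (j + i + k)) ≠ 0) :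
    (∃! p : ℝ × (Fin n → ℝ),
      ∀ i : Fin (n + 1),
        A (j + i) = p.1 + ∑ k : Fin n, p.2 k * (A (j + i + k + 1) - A (j + i + k))) ∧
    (∀ p : ℝ × (Fin n → ℝ),
      (∀ i : Fin (n + 1),
        A (j + i) = p.1 + ∑ k : Fin n, p.2 k * (A (j + i + k + 1) - A (j + i + k))) →
      p.1 = Matrix.det (Matrix.of fun i k : Fin (n + 1) => A (j + i + k)) /
        Matrix.det (Matrix.of fun i k : Fin n =>
          A (j + i + k + 2) - 2 * A (j + i + k + 1) + A (j + i + k))) := by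
  set D : Matrix (Fin n) (Fin n) ℝ :=
    Matrix.of fun i k : Fin n => A (j + i + k + 2) - 2 * A (j + i + k + 1) + A (j + i + k) with hDdef
  set S : Matrix (Fin (n+1)) (Fin (n+1)) ℝ :=
    Matrix.of fun i k : Fin (n+1) => A (j + i + k) with hSdef
  set M : Matrix (Fin (n+1)) (Fin (n+1)) ℝ :=
    Matrix.of fun i : Fin (n+1) =>
      Fin.cons (1:ℝ) (fun k : Fin n => A (j + i + k + 1) - A (j + i + k)) with hMdef
  set b : Fin (n+1) → ℝ := fun i => A (j + i) with hbdef
  -- mulVec computation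
  have hmv : ∀ (p : ℝ × (Fin n → ℝ)) (i : Fin (n+1)),
      M.mulVec (Fin.cons p.1 p.2) i
        = p.1 + ∑ k : Fin n, p.2 k * (A (j + i + k + 1) - A (j + i + k)) := by
    intro p i
    simp only [Matrix.mulVec, dotProduct, hMdef, Matrix.of_apply, Fin.sum_univ_succ,
      Fin.cons_zero, Fin.cons_succ, one_mul]
    congr 1
    exact Finset.sum_congr rfl fun k _ => mul_comm _ _
  -- det M = det D
  have detM : M.det = D.det := by
    set T : Matrix (Fin (n+1)) (Fin (n+1)) ℝ :=
      Matrix.of fun i a => (if a = i then (1:ℝ) else 0) - (if (a:ℕ)+1 = (i:ℕ) then 1 else 0)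
        with hTdef
    have hT : T.det = 1 := by
      rw [Matrix.det_of_lowerTriangular T]
      · simp [hTdef]
      · intro i a hia
        have h1 : ¬ (a = i) := by
          intro h; subst h; exact lt_irrefl _ hia
        have h2 : ¬ ((a:ℕ)+1 = (i:ℕ)) := by
          have : (i:ℕ) < (a:ℕ) := hia
          omega
        simp [hTdef, h1, h2]
    have hTM : ∀ i k, (T * M) i k
        = M i k - Fin.cases 0 (fun i' => M i'.castSucc k) i := by
      intro i k
      have : (T * M) i k = ∑ a, T i a * M a k := rfl
      rw [this]
      have : ∀ a : Fin (n+1), T i a * M a k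
          = (if a = i then M a k else 0) - (if (a:ℕ)+1 = (i:ℕ) then M a k else 0) := by
        intro a
        simp [hTdef, sub_mul, ite_mul]
      simp_rw [this]
      rw [Finset.sum_sub_distrib, Finset.sum_ite_eq' Finset.univ i (fun a => M a k),
        shift_sum i (fun a => M a k)]
      simp
    have hTMmat : T * M = Matrix.of fun i k =>
        M i k - Fin.cases 0 (fun i' => M i'.castSucc k) i := by
      ext i k; exact hTM i k
    have hdet : M.det = (T * M).det := by
      rw [Matrix.det_mul, hT, one_mul]
    rw [hdet, hTMmat, Matrix.det_succ_column_zero, Fin.sum_univ_succ]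
    have hcol0 : ∀ i' : Fin n,
        (Matrix.of fun i k => M i k - Fin.cases 0 (fun i' => M i'.castSucc k) i)
          i'.succ (0 : Fin (n+1)) = 0 := by
      intro i'
      simp [hMdef]
    have hrest : (∑ i' : Fin n, (-1 : ℝ)^((i'.succ : Fin (n+1)):ℕ) *
        (Matrix.of fun i k => M i k - Fin.cases 0 (fun i' => M i'.castSucc k) i) i'.succ 0 *
        (((Matrix.of fun i k => M i k - Fin.cases 0 (fun i' => M i'.castSucc k) i)).submatrix
          (i'.succ).succAbove Fin.succ).det) = 0 := by
      apply Finset.sum_eq_zero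
      intro i' _
      rw [hcol0 i']
      ring
    rw [hrest, add_zero]
    have hsub : ((Matrix.of fun i k => M i k - Fin.cases 0 (fun i' => M i'.castSucc k) i).submatrix
        (Fin.succAbove 0) Fin.succ) = D := by
      ext i k
      simp only [Matrix.submatrix_apply, Matrix.of_apply, Fin.succAbove_zero, Fin.cases_succ,
        hMdef, Fin.cons_succ, hDdef]
      have e1 : j + (i.succ : ℕ) + (k : ℕ) + 1 = j + (i:ℕ) + (k:ℕ) + 2 := by
        simp [Fin.val_succ]; omega
      have e2 : j + (i.succ : ℕ) + (k : ℕ) = j + (i:ℕ) + (k:ℕ) + 1 := by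
        simp [Fin.val_succ]; omega
      have e3 : (i.castSucc : ℕ) = (i : ℕ) := rfl
      rw [e1, e2, e3]
      ring
    rw [hsub]
    simp [hMdef]
  have hMdet : M.det ≠ 0 := by rw [detM]; exact hD
  have hUnit : IsUnit M.det := isUnit_iff_ne_zero.mpr hMdet
  -- injectivity of mulVec
  have hinj : ∀ v w : Fin (n+1) → ℝ, M.mulVec v = M.mulVec w → v = w := by
    intro v w h
    have hv : v = M⁻¹.mulVec (M.mulVec v) := by
      rw [Matrix.mulVec_mulVec, Matrix.nonsing_inv_mul M hUnit, Matrix.one_mulVec]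
    have hw : w = M⁻¹.mulVec (M.mulVec w) := by
      rw [Matrix.mulVec_mulVec, Matrix.nonsing_inv_mul M hUnit, Matrix.one_mulVec]
    rw [hv, hw, h]
  -- det of updateColumn
  have detN : (M.updateCol 0 b).det = S.det := by
    set U : Matrix (Fin (n+1)) (Fin (n+1)) ℝ :=
      Matrix.of fun a c => (if a = c then (1:ℝ) else 0) - (if (a:ℕ)+1 = (c:ℕ) then 1 else 0)
        with hUdef
    have hU : U.det = 1 := by
      rw [Matrix.det_of_upperTriangular]
      · simp [hUdef]
      · intro a c hca
        have h1 : ¬ (a = c) := by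
          intro h; subst h; exact lt_irrefl _ hca
        have h2 : ¬ ((a:ℕ)+1 = (c:ℕ)) := by
          have : (c:ℕ) < (a:ℕ) := hca
          omega
        simp [hUdef, h1, h2]
    have hSU : S * U = M.updateCol 0 b := by
      ext i c
      have : (S * U) i c = ∑ a, S i a * U a c := rfl
      rw [this]
      have : ∀ a : Fin (n+1), S i a * U a c
          = (if a = c then S i a else 0) - (if (a:ℕ)+1 = (c:ℕ) then S i a else 0) := by
        intro a
        simp [hUdef, mul_sub, mul_ite]
      simp_rw [this]
      rw [Finset.sum_sub_distrib, Finset.sum_ite_eq' Finset.univ c (fun a => S i a),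
        shift_sum c (fun a => S i a)]
      simp only [Finset.mem_univ, if_true]
      induction c using Fin.cases with
      | zero =>
        simp [hSdef, hbdef, Matrix.updateCol_apply]
      | succ c' =>
        have hne : (c'.succ : Fin (n+1)) ≠ 0 := Fin.succ_ne_zero c'
        simp only [Fin.cases_succ, Matrix.updateCol_apply, if_neg hne, hSdef, hMdef,
          Matrix.of_apply, Fin.cons_succ]
        have e1 : j + (i:ℕ) + ((c'.succ : Fin (n+1)):ℕ) = j + (i:ℕ) + (c':ℕ) + 1 := by
          simp [Fin.val_succ]; omega
        have e2 : ((c'.castSucc : Fin (n+1)):ℕ) = (c':ℕ) := rfl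
        rw [e1, e2]
    rw [← hSU, Matrix.det_mul, hU, mul_one]
  -- second part: Cramer
  have cram : ∀ p : ℝ × (Fin n → ℝ),
      (∀ i : Fin (n + 1),
        A (j + i) = p.1 + ∑ k : Fin n, p.2 k * (A (j + i + k + 1) - A (j + i + k))) →
      p.1 = S.det / D.det := by
    intro p hp
    have hx : M.mulVec (Fin.cons p.1 p.2) = b := by
      funext i
      rw [hmv p i, hbdef]
      exact (hp i).symm
    have hc : M *ᵥ M.cramer b = M *ᵥ (M.det • (Fin.cons p.1 p.2 : Fin (n+1) → ℝ)) := by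
      rw [Matrix.mulVec_smul, hx]
      exact Matrix.mulVec_cramer M b
    have := hinj _ _ hc
    have h0 := congrFun this 0
    rw [Matrix.cramer_apply] at h0
    simp only [Pi.smul_apply, Fin.cons_zero, smul_eq_mul] at h0
    rw [detN] at h0
    rw [← detM]
    field_simp
    linarith [h0]
  refine ⟨?_, fun p hp => cram p hp⟩
  -- existence and uniqueness
  set x₀ : Fin (n+1) → ℝ := M⁻¹.mulVec b with hx₀
  have hx₀eq : M.mulVec x₀ = b := by
    rw [hx₀, Matrix.mulVec_mulVec, Matrix.mul_nonsing_inv M hUnit, Matrix.one_mulVec]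
  refine ⟨(x₀ 0, fun k => x₀ k.succ), ?_, ?_⟩
  · intro i
    have hcons : (Fin.cons (x₀ 0) (fun k => x₀ k.succ) : Fin (n+1) → ℝ) = x₀ :=
      Fin.cons_self_tail x₀
    have := hmv (x₀ 0, fun k => x₀ k.succ) i
    rw [hcons] at this
    rw [← this, hx₀eq]
  · intro q hq
    have hxq : M.mulVec (Fin.cons q.1 q.2) = b := by
      funext i
      rw [hmv q i, hbdef]
      exact (hq i).symm
    have hxq' : Fin.cons q.1 q.2 = x₀ := by
      apply hinj
      rw [hxq, hx₀eq]
    have h1 : q.1 = x₀ 0 := by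
      rw [← hxq']; simp
    have h2 : q.2 = fun k => x₀ k.succ := by
      funext k
      rw [← hxq']; simp
    exact Prod.ext h1 h2
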